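/- Let 𝕊 be a nonempty finite set with m elements and 𝕍 a nonempty finite set. Let S ∈ 𝕊, V ∈ 𝕍, S̃ ∈ 𝕊, and M ∈ {0,1} be jointly distributed finitely-valued random variables such that (S, V), S̃, and M are mutually independent, S̃ is uniformly distributed on 𝕊, and P(M = 1) = P(M = 0) = 1/2. Define S̄ := S on the event {M = 1} and S̄ := S̃ on the event {M = 0}. Then for every (s, v) with P(S = s, V = v) > 0, the conditional probabilities P(M = 1 | S̄ = s, V = v) and P(M = 0 | S̄ = s, V = v) are well-defined and lie in (0,1), and the likelihood ratio satisfies log( P(S = s, V = v) / ( (1/m) · P(V = v) ) ) = log( P(M = 1 | S̄ = s, V = v) / P(M = 0 | S̄ = s, V = v) ). -/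

import Mathlib

open scoped BigOperators Classical

noncomputable section

namespace NCS

/-- Probability of an event under a pmf `P` on a finite sample space. -/
def pr {Ω : Type} [Fintype Ω] (P : Ω → ℝ) (E : Ω → Prop) : ℝ :=
  ∑ ω, if E ω then P ω else 0

/-- Conditional probability `P(E | F)`, as a ratio of probabilities. -/
def condPr {Ω : Type} [Fintype Ω] (P : Ω → ℝ) (E F : Ω → Prop) : ℝ :=
  pr P (fun ω => E ω ∧ F ω) / pr P F

lemma pr_congr {Ω : Type} [Fintype Ω] (P : Ω → ℝ) {E F : Ω → Prop}
    (h : ∀ ω, E ω ↔ F ω) : pr P E = pr P F := by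
  unfold pr; exact Finset.sum_congr rfl fun ω _ => by rw [h ω]

lemma pr_nonneg {Ω : Type} [Fintype Ω] (P : Ω → ℝ) (hP : ∀ ω, 0 ≤ P ω)
    (E : Ω → Prop) : 0 ≤ pr P E := by
  unfold pr
  exact Finset.sum_nonneg fun ω _ => by by_cases h : E ω <;> simp [h, hP ω]

lemma pr_mono {Ω : Type} [Fintype Ω] (P : Ω → ℝ) (hP : ∀ ω, 0 ≤ P ω)
    {E F : Ω → Prop} (h : ∀ ω, E ω → F ω) : pr P E ≤ pr P F := by
  unfold pr
  refine Finset.sum_le_sum fun ω _ => ?_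
  by_cases hE : E ω
  · simp [hE, h ω hE]
  · by_cases hF : F ω <;> simp [hE, hF, hP ω]

lemma pr_fiber {Ω α : Type} [Fintype Ω] [Fintype α] (P : Ω → ℝ) (E : Ω → Prop)
    (f : Ω → α) : pr P E = ∑ a, pr P (fun ω => E ω ∧ f ω = a) := by
  unfold pr
  rw [Finset.sum_comm]
  refine Finset.sum_congr rfl fun ω _ => ?_
  by_cases h : E ω
  · simp [h]
  · simp [h]

lemma pr_bool {Ω : Type} [Fintype Ω] (P : Ω → ℝ) (E : Ω → Prop) (M : Ω → Bool) :
    pr P E = pr P (fun ω => E ω ∧ M ω = true) + pr P (fun ω => E ω ∧ M ω = false) := by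
  rw [pr_fiber P E M, Fintype.sum_bool]

/-- Likelihood ratio via binary classification: if `(S, V)`,
`S̃`, `M` are mutually independent, `S̃` is uniform on `𝕊` (of cardinality `m`),
`P(M = 1) = P(M = 0) = 1/2`, and `S̄ = S` on `{M = 1}`, `S̄ = S̃` on `{M = 0}`,
then for every `(s, v)` with `P(S = s, V = v) > 0` the conditional
probabilities `P(M = 1 | S̄ = s, V = v)` and `P(M = 0 | S̄ = s, V = v)` are
well-defined and lie in `(0,1)`, and
`log( P(S = s, V = v) / ((1/m) · P(V = v)) )
  = log( P(M = 1 | S̄ = s, V = v) / P(M = 0 | S̄ = s, V = v) )`. -/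
theorem likelihood_ratio_via_binary_classification
    {Ω 𝕊 𝕍 : Type} [Fintype Ω] [Nonempty Ω] [Fintype 𝕊] [Nonempty 𝕊]
    [Fintype 𝕍] [Nonempty 𝕍]
    (P : Ω → ℝ) (hP : ∀ ω, 0 ≤ P ω) (hPsum : ∑ ω, P ω = 1)
    (S : Ω → 𝕊) (V : Ω → 𝕍) (St : Ω → 𝕊) (M : Ω → Bool)
    (hindep : ∀ (s : 𝕊) (v : 𝕍) (s' : 𝕊) (m : Bool),
      pr P (fun ω => S ω = s ∧ V ω = v ∧ St ω = s' ∧ M ω = m) =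
        pr P (fun ω => S ω = s ∧ V ω = v) * pr P (fun ω => St ω = s') *
          pr P (fun ω => M ω = m))
    (hunif : ∀ s' : 𝕊, pr P (fun ω => St ω = s') = 1 / (Fintype.card 𝕊 : ℝ))
    (hM1 : pr P (fun ω => M ω = true) = 1 / 2)
    (hM0 : pr P (fun ω => M ω = false) = 1 / 2)
    (Sbar : Ω → 𝕊) (hSbar : ∀ ω, Sbar ω = if M ω then S ω else St ω) :
    ∀ (s : 𝕊) (v : 𝕍), 0 < pr P (fun ω => S ω = s ∧ V ω = v) →
      0 < pr P (fun ω => Sbar ω = s ∧ V ω = v) ∧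
      condPr P (fun ω => M ω = true) (fun ω => Sbar ω = s ∧ V ω = v) ∈
        Set.Ioo (0 : ℝ) 1 ∧
      condPr P (fun ω => M ω = false) (fun ω => Sbar ω = s ∧ V ω = v) ∈
        Set.Ioo (0 : ℝ) 1 ∧
      Real.log (pr P (fun ω => S ω = s ∧ V ω = v) /
          ((1 / (Fintype.card 𝕊 : ℝ)) * pr P (fun ω => V ω = v))) =
        Real.log (condPr P (fun ω => M ω = true) (fun ω => Sbar ω = s ∧ V ω = v) /
          condPr P (fun ω => M ω = false) (fun ω => Sbar ω = s ∧ V ω = v)) := by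
  intro s v hA
  set m : ℝ := (Fintype.card 𝕊 : ℝ) with hm
  have hmpos : 0 < m := by
    rw [hm]; exact_mod_cast Fintype.card_pos
  set A : ℝ := pr P (fun ω => S ω = s ∧ V ω = v) with hAdef
  set Bv : ℝ := pr P (fun ω => V ω = v) with hBvdef
  have hAB : A ≤ Bv := pr_mono P hP fun ω h => h.2
  have hBpos : 0 < Bv := lt_of_lt_of_le hA hAB
  -- marginal of V over S
  have hBsum : Bv = ∑ s'' : 𝕊, pr P (fun ω => S ω = s'' ∧ V ω = v) := by
    rw [hBvdef, pr_fiber P _ S]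
    exact Finset.sum_congr rfl fun s'' _ => pr_congr P fun ω => by tauto
  -- key computation for M = true
  have key1 : pr P (fun ω => (Sbar ω = s ∧ V ω = v) ∧ M ω = true) = A * (1 / 2) := by
    have h1 : pr P (fun ω => (Sbar ω = s ∧ V ω = v) ∧ M ω = true)
        = pr P (fun ω => S ω = s ∧ V ω = v ∧ M ω = true) := by
      refine pr_congr P fun ω => ?_
      constructor
      · rintro ⟨⟨h1, h2⟩, h3⟩
        rw [hSbar ω, h3] at h1; simp at h1; exact ⟨h1, h2, h3⟩
      · rintro ⟨h1, h2, h3⟩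
        refine ⟨⟨?_, h2⟩, h3⟩
        rw [hSbar ω, h3]; simpa
    rw [h1, pr_fiber P _ St]
    have h2 : ∀ s' : 𝕊, pr P (fun ω => (S ω = s ∧ V ω = v ∧ M ω = true) ∧ St ω = s')
        = A * (1 / m) * (1 / 2) := by
      intro s'
      rw [pr_congr P (F := fun ω => S ω = s ∧ V ω = v ∧ St ω = s' ∧ M ω = true)
        (fun ω => by tauto), hindep, hunif, hM1]
    rw [Finset.sum_congr rfl fun s' _ => h2 s', Finset.sum_const, Finset.card_univ,
      nsmul_eq_mul, ← hm]
    field_simp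
  -- key computation for M = false
  have key0 : pr P (fun ω => (Sbar ω = s ∧ V ω = v) ∧ M ω = false)
      = Bv * (1 / m) * (1 / 2) := by
    have h1 : pr P (fun ω => (Sbar ω = s ∧ V ω = v) ∧ M ω = false)
        = pr P (fun ω => St ω = s ∧ V ω = v ∧ M ω = false) := by
      refine pr_congr P fun ω => ?_
      constructor
      · rintro ⟨⟨h1, h2⟩, h3⟩
        rw [hSbar ω, h3] at h1; simp at h1; exact ⟨h1, h2, h3⟩
      · rintro ⟨h1, h2, h3⟩
        refine ⟨⟨?_, h2⟩, h3⟩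
        rw [hSbar ω, h3]; simpa
    rw [h1, pr_fiber P _ S]
    have h2 : ∀ s'' : 𝕊, pr P (fun ω => (St ω = s ∧ V ω = v ∧ M ω = false) ∧ S ω = s'')
        = pr P (fun ω => S ω = s'' ∧ V ω = v) * (1 / m) * (1 / 2) := by
      intro s''
      rw [pr_congr P (F := fun ω => S ω = s'' ∧ V ω = v ∧ St ω = s ∧ M ω = false)
        (fun ω => by tauto), hindep, hunif, hM0]
    rw [Finset.sum_congr rfl fun s'' _ => h2 s'']
    rw [← Finset.sum_mul, ← Finset.sum_mul, ← hBsum]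
  -- the denominator
  set D : ℝ := pr P (fun ω => Sbar ω = s ∧ V ω = v) with hDdef
  have hD : D = A * (1 / 2) + Bv * (1 / m) * (1 / 2) := by
    rw [hDdef, pr_bool P _ M, key1, key0]
  have hApos2 : 0 < A * (1 / 2) := by positivity
  have hBpos2 : 0 < Bv * (1 / m) * (1 / 2) := by positivity
  have hDpos : 0 < D := by rw [hD]; positivity
  -- express the conditional probabilities
  have hc1 : condPr P (fun ω => M ω = true) (fun ω => Sbar ω = s ∧ V ω = v)
      = A * (1 / 2) / D := by
    rw [condPr, ← hDdef, ← key1]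
    congr 1
    exact pr_congr P fun ω => by tauto
  have hc0 : condPr P (fun ω => M ω = false) (fun ω => Sbar ω = s ∧ V ω = v)
      = Bv * (1 / m) * (1 / 2) / D := by
    rw [condPr, ← hDdef, ← key0]
    congr 1
    exact pr_congr P fun ω => by tauto
  refine ⟨hDpos, ⟨by rw [hc1]; positivity, ?_⟩, ⟨by rw [hc0]; positivity, ?_⟩, ?_⟩
  · rw [hc1, div_lt_one hDpos, hD]
    linarith
  · rw [hc0, div_lt_one hDpos, hD]
    linarith
  · rw [hc1, hc0]
    congr 1
    have hDne : D ≠ 0 := ne_of_gt hDpos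
    have hBne : Bv ≠ 0 := ne_of_gt hBpos
    have hmne : m ≠ 0 := ne_of_gt hmpos
    field_simp

end NCS
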